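/- (Monotonicity of the stationary MFG operator) Let H : ℝ^d → ℝ be C² and convex, g : ℝ₀⁺ → ℝ continuous and increasing, and V, φ ∈ C(𝕋^d). Define F(m, u) = (-u - H(Du) + g(m) - V, m - div(m D_pH(Du)) - φ) on D(F) = C²(𝕋^d; ℝ₀⁺) × C¹(𝕋^d). Then for all (m₁, u₁), (m₂, u₂) ∈ D(F), ⟨F(m₁,u₁) - F(m₂,u₂), (m₁,u₁) - (m₂,u₂)⟩_{L²×L²} = ∫ m₁[H(Du₂) - H(Du₁) - D_pH(Du₁)·(Du₂ - Du₁)] + ∫ m₂[H(Du₁) - H(Du₂) - D_pH(Du₂)·(Du₁ - Du₂)] + ∫ (m₁ - m₂)(g(m₁) - g(m₂)) dx ≥ 0. -/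

import Mathlib

noncomputable section
open MeasureTheory

/-- Euclidean space `ℝ^d`, the covering space of the torus `𝕋^d`. -/
abbrev Ed (d : ℕ) := Fin d → ℝ

/-- A fundamental domain (unit cube) for the torus `𝕋^d = ℝ^d / ℤ^d`. -/
def cube (d : ℕ) : Set (Ed d) := Set.univ.pi fun _ => Set.Icc (0:ℝ) 1

/-- `ℤ^d`-periodicity: a function on `ℝ^d` represents a function on the torus `𝕋^d`. -/
def Per {d : ℕ} (u : Ed d → ℝ) : Prop :=
  ∀ (x : Ed d) (m : Fin d → ℤ), u (x + fun i => (m i : ℝ)) = u x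

/-- `i`-th partial derivative. -/
def pd {d : ℕ} (i : Fin d) (u : Ed d → ℝ) (x : Ed d) : ℝ :=
  fderiv ℝ u x (Pi.single i 1)

/-- The gradient `Du`. -/
def grad {d : ℕ} (u : Ed d → ℝ) (x : Ed d) : Ed d := fun i => pd i u x

/-- The `i`-th component of the flux `m D_pH(Du)`. -/
def flux {d : ℕ} (H : Ed d → ℝ) (m u : Ed d → ℝ) (i : Fin d) (y : Ed d) : ℝ :=
  m y * pd i H (grad u y)

/-- The divergence `div(m D_pH(Du))`. -/
def divFlux {d : ℕ} (H : Ed d → ℝ) (m u : Ed d → ℝ) (x : Ed d) : ℝ :=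
  ∑ i, pd i (flux H m u i) x

/-- First component of the MFG operator: `-u - H(Du) + g(m) - V`. -/
def F1 {d : ℕ} (H : Ed d → ℝ) (g : ℝ → ℝ) (V : Ed d → ℝ) (m u : Ed d → ℝ) (x : Ed d) : ℝ :=
  -(u x) - H (grad u x) + g (m x) - V x

/-- Second component of the MFG operator: `m - div(m D_pH(Du)) - φ`. -/
def F2 {d : ℕ} (H : Ed d → ℝ) (φ : Ed d → ℝ) (m u : Ed d → ℝ) (x : Ed d) : ℝ :=
  m x - divFlux H m u x - φ x

-- cube = Icc
lemma cube_eq_Icc (d : ℕ) : cube d = Set.Icc (0 : Ed d) 1 := Set.pi_univ_Icc _ _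

-- continuity of pd
lemma cont_pd {d : ℕ} {f : Ed d → ℝ} (hf : ContDiff ℝ 1 f) (i : Fin d) :
    Continuous (pd i f) := by
  show Continuous fun x => fderiv ℝ f x (Pi.single i 1)
  exact (hf.continuous_fderiv (by norm_num)).clm_apply continuous_const

-- translation invariance of fderiv for differentiable periodic functions
lemma per_pd {d : ℕ} {u : Ed d → ℝ} (hu : Differentiable ℝ u) (hper : Per u) (i : Fin d) :
    Per (pd i u) := by
  intro x c
  have h1 : (fun y : Ed d => u (y + fun j => (c j : ℝ))) = u := funext fun y => hper y c
  have h2 : HasFDerivAt (fun y : Ed d => y + fun j => (c j : ℝ))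
      (ContinuousLinearMap.id ℝ (Ed d)) x := by
    simpa using (hasFDerivAt_id (𝕜 := ℝ) x).add_const (fun j => (c j : ℝ))
  have h3 : HasFDerivAt (fun y : Ed d => u (y + fun j => (c j : ℝ)))
      ((fderiv ℝ u (x + fun j => (c j : ℝ))).comp (ContinuousLinearMap.id ℝ (Ed d))) x :=
    (hu _).hasFDerivAt.comp x h2
  rw [h1] at h3
  rw [pd, pd, h3.fderiv]
  simp
-- fderiv applied to a vector as sum of partials
lemma fderiv_apply_eq_sum {d : ℕ} {f : Ed d → ℝ} (x v : Ed d) :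
    fderiv ℝ f x v = ∑ i, v i * pd i f x := by
  have hv : v = ∑ i, v i • (Pi.single i 1 : Ed d) := by
    funext j
    simp [Finset.sum_apply, Pi.single_apply, mul_comm]
  conv_lhs => rw [hv]
  rw [map_sum]
  simp [pd]

-- convexity inequality
lemma convex_bregman {d : ℕ} {H : Ed d → ℝ} (hH : ContDiff ℝ 2 H)
    (hc : ConvexOn ℝ Set.univ H) (p q : Ed d) :
    0 ≤ H q - H p - ∑ i, pd i H p * (q i - p i) := by
  have hdiff : Differentiable ℝ H := hH.differentiable (by norm_num)
  set L := AffineMap.lineMap (k := ℝ) p q with hL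
  have hline : HasDerivAt (fun t : ℝ => L t) (q - p) 0 := by
    simp only [hL, AffineMap.lineMap_apply]
    simpa using ((hasDerivAt_id (0:ℝ)).smul_const (q - p)).add_const p
  have hφ : HasDerivAt (fun t : ℝ => H (L t)) (fderiv ℝ H p (q - p)) 0 := by
    have h0 : HasFDerivAt H (fderiv ℝ H (L 0)) (L 0) := (hdiff _).hasFDerivAt
    have := h0.comp_hasDerivAt 0 hline
    simpa [hL, Function.comp_def] using this
  have hconv : ConvexOn ℝ Set.univ (fun t : ℝ => H (L t)) := by
    have := hc.comp_affineMap L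
    simpa [Function.comp_def] using this
  have hs := hconv.le_slope_of_hasDerivAt (Set.mem_univ (0:ℝ)) (Set.mem_univ (1:ℝ))
    one_pos hφ
  have hineq : fderiv ℝ H p (q - p) ≤ H q - H p := by
    simpa [slope, hL] using hs
  have he : fderiv ℝ H p (q - p) = ∑ i, pd i H p * (q i - p i) := by
    rw [fderiv_apply_eq_sum]
    exact Finset.sum_congr rfl fun i _ => by simp [mul_comm]
  rw [he] at hineq
  linarith

-- product/sub rules for pd
lemma pd_mul {d : ℕ} {f g : Ed d → ℝ} {x : Ed d} (i : Fin d)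
    (hf : DifferentiableAt ℝ f x) (hg : DifferentiableAt ℝ g x) :
    pd i (fun y => f y * g y) x = pd i f x * g x + f x * pd i g x := by
  simp only [pd, fderiv_fun_mul hf hg]
  simp only [ContinuousLinearMap.add_apply, ContinuousLinearMap.smul_apply, smul_eq_mul]
  ring

lemma pd_sub {d : ℕ} {f g : Ed d → ℝ} {x : Ed d} (i : Fin d)
    (hf : DifferentiableAt ℝ f x) (hg : DifferentiableAt ℝ g x) :
    pd i (fun y => f y - g y) x = pd i f x - pd i g x := by
  simp only [pd, fderiv_fun_sub hf hg]; simp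

-- Integration by parts core: integral of a divergence of periodic C¹ fields over the cube is 0
lemma integral_div_eq_zero {d : ℕ} (f : Fin d → Ed d → ℝ)
    (hf : ∀ i, ContDiff ℝ 1 (f i)) (hper : ∀ i, Per (f i)) :
    ∫ x in cube d, (∑ i, pd i (f i) x) = 0 := by
  cases d with
  | zero => simp
  | succ n =>
    rw [cube_eq_Icc]
    have key := MeasureTheory.integral_divergence_of_hasFDerivAt_off_countable'
      (0 : Ed (n+1)) 1 (by intro i; norm_num) f (fun i x => fderiv ℝ (f i) x) ∅
      Set.countable_empty (fun i => (hf i).continuous.continuousOn)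
      (fun x _ i => ((hf i).differentiable (by norm_num) x).hasFDerivAt)
      (by
        apply ContinuousOn.integrableOn_compact isCompact_Icc
        exact (continuous_finset_sum _ fun i _ => cont_pd (hf i) i).continuousOn)
    have key2 : (∫ x in Set.Icc (0 : Ed (n+1)) 1, ∑ i, pd i (f i) x)
        = ∑ i : Fin (n+1),
          ((∫ x in Set.Icc ((0:Ed (n+1)) ∘ i.succAbove) ((1:Ed (n+1)) ∘ i.succAbove),
              f i (i.insertNth ((1:Ed (n+1)) i) x))
            - ∫ x in Set.Icc ((0:Ed (n+1)) ∘ i.succAbove) ((1:Ed (n+1)) ∘ i.succAbove),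
              f i (i.insertNth ((0:Ed (n+1)) i) x)) := key
    rw [key2]
    apply Finset.sum_eq_zero
    intro i _
    have hfront : ∀ y : Ed n, (i.insertNth (1:ℝ) y) =
        (i.insertNth (0:ℝ) y) + fun j => (((Pi.single i 1 : Fin (n+1) → ℤ) j : ℤ) : ℝ) := by
      intro y
      funext j
      rcases eq_or_ne j i with rfl | hj
      · simp
      · obtain ⟨k, hk⟩ := Fin.exists_succAbove_eq hj
        subst hk
        simp [Fin.insertNth_apply_succAbove, Pi.single_apply,
          (Fin.succAbove_ne i k).symm, Fin.succAbove_ne i k]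
    have : ∀ y : Ed n, f i (i.insertNth (1:ℝ) y) = f i (i.insertNth (0:ℝ) y) := by
      intro y
      rw [hfront y]
      exact hper i (i.insertNth (0:ℝ) y) (Pi.single i 1)
    simp only [Pi.zero_apply, Pi.one_apply]
    rw [sub_eq_zero]
    exact setIntegral_congr_fun (by measurability) (fun y _ => this y)
-- pointwise identity
lemma pointwise_id {d : ℕ}
    (H : Ed d → ℝ) (g : ℝ → ℝ) (V φ : Ed d → ℝ)
    (m₁ u₁ m₂ u₂ : Ed d → ℝ)
    (hu₁ : ContDiff ℝ 1 u₁) (hu₂ : ContDiff ℝ 1 u₂)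
    (hflux₁ : ∀ i, ContDiff ℝ 1 (flux H m₁ u₁ i))
    (hflux₂ : ∀ i, ContDiff ℝ 1 (flux H m₂ u₂ i))
    (x : Ed d) :
    (F1 H g V m₁ u₁ x - F1 H g V m₂ u₂ x) * (m₁ x - m₂ x)
      + (F2 H φ m₁ u₁ x - F2 H φ m₂ u₂ x) * (u₁ x - u₂ x)
    = m₁ x * (H (grad u₂ x) - H (grad u₁ x)
          - ∑ i, pd i H (grad u₁ x) * (pd i u₂ x - pd i u₁ x))
      + m₂ x * (H (grad u₁ x) - H (grad u₂ x)
          - ∑ i, pd i H (grad u₂ x) * (pd i u₁ x - pd i u₂ x))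
      + (m₁ x - m₂ x) * (g (m₁ x) - g (m₂ x))
      - ∑ i, pd i (fun y => (flux H m₁ u₁ i y - flux H m₂ u₂ i y) * (u₁ y - u₂ y)) x := by
  have hprod : ∀ i, pd i (fun y => (flux H m₁ u₁ i y - flux H m₂ u₂ i y) * (u₁ y - u₂ y)) x
      = (pd i (flux H m₁ u₁ i) x - pd i (flux H m₂ u₂ i) x) * (u₁ x - u₂ x)
        + (flux H m₁ u₁ i x - flux H m₂ u₂ i x) * (pd i u₁ x - pd i u₂ x) := by
    intro i
    rw [pd_mul (f := fun y => flux H m₁ u₁ i y - flux H m₂ u₂ i y) (g := fun y => u₁ y - u₂ y) i (((hflux₁ i).differentiable one_ne_zero x).sub ((hflux₂ i).differentiable one_ne_zero x))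
      ((hu₁.differentiable one_ne_zero x).sub (hu₂.differentiable one_ne_zero x)),
      pd_sub i ((hflux₁ i).differentiable one_ne_zero x) ((hflux₂ i).differentiable one_ne_zero x),
      pd_sub i (hu₁.differentiable one_ne_zero x) (hu₂.differentiable one_ne_zero x)]
  have hsum : ∑ i, pd i (fun y => (flux H m₁ u₁ i y - flux H m₂ u₂ i y) * (u₁ y - u₂ y)) x
      = (∑ i, pd i (flux H m₁ u₁ i) x - ∑ i, pd i (flux H m₂ u₂ i) x) * (u₁ x - u₂ x)
        + ∑ i, (flux H m₁ u₁ i x - flux H m₂ u₂ i x) * (pd i u₁ x - pd i u₂ x) := by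
    rw [Finset.sum_congr rfl fun i _ => hprod i, Finset.sum_add_distrib,
      ← Finset.sum_sub_distrib, Finset.sum_mul]
  have hP : m₁ x * (H (grad u₂ x) - H (grad u₁ x)
          - ∑ i, pd i H (grad u₁ x) * (pd i u₂ x - pd i u₁ x))
      + m₂ x * (H (grad u₁ x) - H (grad u₂ x)
          - ∑ i, pd i H (grad u₂ x) * (pd i u₁ x - pd i u₂ x))
      = (m₁ x - m₂ x) * (H (grad u₂ x) - H (grad u₁ x))
        + ∑ i, (flux H m₁ u₁ i x - flux H m₂ u₂ i x) * (pd i u₁ x - pd i u₂ x) := by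
    have hPP : ∑ i, (flux H m₁ u₁ i x - flux H m₂ u₂ i x) * (pd i u₁ x - pd i u₂ x)
        = m₁ x * (∑ i, pd i H (grad u₁ x) * (pd i u₁ x - pd i u₂ x))
          - m₂ x * (∑ i, pd i H (grad u₂ x) * (pd i u₁ x - pd i u₂ x)) := by
      rw [Finset.mul_sum, Finset.mul_sum, ← Finset.sum_sub_distrib]
      exact Finset.sum_congr rfl fun i _ => by simp only [flux]; ring
    have h1 : ∑ i, pd i H (grad u₁ x) * (pd i u₁ x - pd i u₂ x)
        = -∑ i, pd i H (grad u₁ x) * (pd i u₂ x - pd i u₁ x) := by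
      rw [← Finset.sum_neg_distrib]
      exact Finset.sum_congr rfl fun i _ => by ring
    rw [hPP, h1]
    ring
  simp only [F1, F2, divFlux]
  rw [hsum, hP]
  ring

/-- Monotonicity of the stationary MFG operator
`F(m,u) = (-u - H(Du) + g(m) - V, m - div(m D_pH(Du)) - φ)` on
`C²(𝕋^d;ℝ₀⁺) × C¹(𝕋^d)`: the `L² × L²` pairing of `F(m₁,u₁) - F(m₂,u₂)` with
`(m₁,u₁) - (m₂,u₂)` equals the sum of the three convexity/monotonicity integrals,
and is nonnegative. -/
theorem stationary_MFG_monotone {d : ℕ}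
    (H : Ed d → ℝ) (g : ℝ → ℝ) (V φ : Ed d → ℝ)
    (hH : ContDiff ℝ 2 H) (hHconv : ConvexOn ℝ Set.univ H)
    (hgc : ContinuousOn g (Set.Ici 0)) (hgmono : MonotoneOn g (Set.Ici 0))
    (hV : Continuous V) (hVper : Per V)
    (hφ : Continuous φ) (hφper : Per φ)
    (m₁ u₁ m₂ u₂ : Ed d → ℝ)
    (hm₁ : ContDiff ℝ 2 m₁) (hm₁per : Per m₁) (hm₁nn : ∀ x, 0 ≤ m₁ x)
    (hu₁ : ContDiff ℝ 1 u₁) (hu₁per : Per u₁)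
    (hflux₁ : ∀ i, ContDiff ℝ 1 (flux H m₁ u₁ i))
    (hm₂ : ContDiff ℝ 2 m₂) (hm₂per : Per m₂) (hm₂nn : ∀ x, 0 ≤ m₂ x)
    (hu₂ : ContDiff ℝ 1 u₂) (hu₂per : Per u₂)
    (hflux₂ : ∀ i, ContDiff ℝ 1 (flux H m₂ u₂ i)) :
    ((∫ x in cube d, (F1 H g V m₁ u₁ x - F1 H g V m₂ u₂ x) * (m₁ x - m₂ x))
        + ∫ x in cube d, (F2 H φ m₁ u₁ x - F2 H φ m₂ u₂ x) * (u₁ x - u₂ x))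
      = (∫ x in cube d, m₁ x *
            (H (grad u₂ x) - H (grad u₁ x)
              - ∑ i, pd i H (grad u₁ x) * (pd i u₂ x - pd i u₁ x)))
        + (∫ x in cube d, m₂ x *
            (H (grad u₁ x) - H (grad u₂ x)
              - ∑ i, pd i H (grad u₂ x) * (pd i u₁ x - pd i u₂ x)))
        + ∫ x in cube d, (m₁ x - m₂ x) * (g (m₁ x) - g (m₂ x))
    ∧ 0 ≤ (∫ x in cube d, m₁ x *
            (H (grad u₂ x) - H (grad u₁ x)
              - ∑ i, pd i H (grad u₁ x) * (pd i u₂ x - pd i u₁ x)))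
        + (∫ x in cube d, m₂ x *
            (H (grad u₁ x) - H (grad u₂ x)
              - ∑ i, pd i H (grad u₂ x) * (pd i u₁ x - pd i u₂ x)))
        + ∫ x in cube d, (m₁ x - m₂ x) * (g (m₁ x) - g (m₂ x)) := by
  have hcpt : IsCompact (cube d) := by rw [cube_eq_Icc]; exact isCompact_Icc
  have hmeas : MeasurableSet (cube d) := by rw [cube_eq_Icc]; exact measurableSet_Icc
  -- continuity facts
  have hHc1 : ContDiff ℝ 1 H := hH.of_le (by norm_num)
  have contgrad₁ : Continuous (grad u₁) := continuous_pi fun i => cont_pd hu₁ i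
  have contgrad₂ : Continuous (grad u₂) := continuous_pi fun i => cont_pd hu₂ i
  have contHg₁ : Continuous fun x => H (grad u₁ x) := hH.continuous.comp contgrad₁
  have contHg₂ : Continuous fun x => H (grad u₂ x) := hH.continuous.comp contgrad₂
  have contpdH₁ : ∀ i, Continuous fun x => pd i H (grad u₁ x) :=
    fun i => (cont_pd hHc1 i).comp contgrad₁
  have contpdH₂ : ∀ i, Continuous fun x => pd i H (grad u₂ x) :=
    fun i => (cont_pd hHc1 i).comp contgrad₂
  have contg₁ : Continuous fun x => g (m₁ x) :=
    hgc.comp_continuous hm₁.continuous fun x => hm₁nn x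
  have contg₂ : Continuous fun x => g (m₂ x) :=
    hgc.comp_continuous hm₂.continuous fun x => hm₂nn x
  have contdiv₁ : Continuous (divFlux H m₁ u₁) :=
    continuous_finset_sum _ fun i _ => cont_pd (hflux₁ i) i
  have contdiv₂ : Continuous (divFlux H m₂ u₂) :=
    continuous_finset_sum _ fun i _ => cont_pd (hflux₂ i) i
  have contF1₁ : Continuous (F1 H g V m₁ u₁) :=
    ((hu₁.continuous.neg.sub contHg₁).add contg₁).sub hV
  have contF1₂ : Continuous (F1 H g V m₂ u₂) :=
    ((hu₂.continuous.neg.sub contHg₂).add contg₂).sub hV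
  have contF2₁ : Continuous (F2 H φ m₁ u₁) := (hm₁.continuous.sub contdiv₁).sub hφ
  have contF2₂ : Continuous (F2 H φ m₂ u₂) := (hm₂.continuous.sub contdiv₂).sub hφ
  have contA : Continuous fun x => (F1 H g V m₁ u₁ x - F1 H g V m₂ u₂ x) * (m₁ x - m₂ x) :=
    (contF1₁.sub contF1₂).mul (hm₁.continuous.sub hm₂.continuous)
  have contB : Continuous fun x => (F2 H φ m₁ u₁ x - F2 H φ m₂ u₂ x) * (u₁ x - u₂ x) :=
    (contF2₁.sub contF2₂).mul (hu₁.continuous.sub hu₂.continuous)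
  have contR1 : Continuous fun x => m₁ x * (H (grad u₂ x) - H (grad u₁ x)
      - ∑ i, pd i H (grad u₁ x) * (pd i u₂ x - pd i u₁ x)) :=
    hm₁.continuous.mul ((contHg₂.sub contHg₁).sub (continuous_finset_sum _ fun i _ =>
      (contpdH₁ i).mul ((cont_pd hu₂ i).sub (cont_pd hu₁ i))))
  have contR2 : Continuous fun x => m₂ x * (H (grad u₁ x) - H (grad u₂ x)
      - ∑ i, pd i H (grad u₂ x) * (pd i u₁ x - pd i u₂ x)) :=
    hm₂.continuous.mul ((contHg₁.sub contHg₂).sub (continuous_finset_sum _ fun i _ =>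
      (contpdH₂ i).mul ((cont_pd hu₁ i).sub (cont_pd hu₂ i))))
  have contR3 : Continuous fun x => (m₁ x - m₂ x) * (g (m₁ x) - g (m₂ x)) :=
    (hm₁.continuous.sub hm₂.continuous).mul (contg₁.sub contg₂)
  -- the flux-difference field times (u₁ - u₂)
  have hfiC : ∀ i, ContDiff ℝ 1
      fun y => (flux H m₁ u₁ i y - flux H m₂ u₂ i y) * (u₁ y - u₂ y) :=
    fun i => ((hflux₁ i).sub (hflux₂ i)).mul (hu₁.sub hu₂)
  have contD : Continuous fun x =>
      ∑ i, pd i (fun y => (flux H m₁ u₁ i y - flux H m₂ u₂ i y) * (u₁ y - u₂ y)) x :=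
    continuous_finset_sum _ fun i _ => cont_pd (hfiC i) i
  -- periodicity of the field
  have pergrad₁ : ∀ (x : Ed d) (c : Fin d → ℤ),
      grad u₁ (x + fun j => (c j : ℝ)) = grad u₁ x := fun x c =>
    funext fun j => per_pd (hu₁.differentiable one_ne_zero) hu₁per j x c
  have pergrad₂ : ∀ (x : Ed d) (c : Fin d → ℤ),
      grad u₂ (x + fun j => (c j : ℝ)) = grad u₂ x := fun x c =>
    funext fun j => per_pd (hu₂.differentiable one_ne_zero) hu₂per j x c
  have perfi : ∀ i, Per fun y => (flux H m₁ u₁ i y - flux H m₂ u₂ i y) * (u₁ y - u₂ y) := by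
    intro i x c
    simp only [flux, hm₁per x c, hm₂per x c, pergrad₁ x c, pergrad₂ x c,
      hu₁per x c, hu₂per x c]
  have hD0 : (∫ x in cube d,
      ∑ i, pd i (fun y => (flux H m₁ u₁ i y - flux H m₂ u₂ i y) * (u₁ y - u₂ y)) x) = 0 :=
    integral_div_eq_zero _ hfiC perfi
  -- integrabilities
  have iA := contA.continuousOn.integrableOn_compact (μ := volume) hcpt
  have iB := contB.continuousOn.integrableOn_compact (μ := volume) hcpt
  have iR1 := contR1.continuousOn.integrableOn_compact (μ := volume) hcpt
  have iR2 := contR2.continuousOn.integrableOn_compact (μ := volume) hcpt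
  have iR3 := contR3.continuousOn.integrableOn_compact (μ := volume) hcpt
  have iD := contD.continuousOn.integrableOn_compact (μ := volume) hcpt
  constructor
  · rw [← integral_add iA iB]
    have hpt := pointwise_id H g V φ m₁ u₁ m₂ u₂ hu₁ hu₂ hflux₁ hflux₂
    calc (∫ x in cube d, ((F1 H g V m₁ u₁ x - F1 H g V m₂ u₂ x) * (m₁ x - m₂ x)
            + (F2 H φ m₁ u₁ x - F2 H φ m₂ u₂ x) * (u₁ x - u₂ x)))
        = ∫ x in cube d, (m₁ x * (H (grad u₂ x) - H (grad u₁ x)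
              - ∑ i, pd i H (grad u₁ x) * (pd i u₂ x - pd i u₁ x))
            + m₂ x * (H (grad u₁ x) - H (grad u₂ x)
              - ∑ i, pd i H (grad u₂ x) * (pd i u₁ x - pd i u₂ x))
            + (m₁ x - m₂ x) * (g (m₁ x) - g (m₂ x))
            - ∑ i, pd i (fun y => (flux H m₁ u₁ i y - flux H m₂ u₂ i y) * (u₁ y - u₂ y)) x) := by
          exact integral_congr_ae (Filter.Eventually.of_forall fun x => hpt x)
      _ = (∫ x in cube d, m₁ x * (H (grad u₂ x) - H (grad u₁ x)
              - ∑ i, pd i H (grad u₁ x) * (pd i u₂ x - pd i u₁ x)))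
          + (∫ x in cube d, m₂ x * (H (grad u₁ x) - H (grad u₂ x)
              - ∑ i, pd i H (grad u₂ x) * (pd i u₁ x - pd i u₂ x)))
          + (∫ x in cube d, (m₁ x - m₂ x) * (g (m₁ x) - g (m₂ x)))
          - ∫ x in cube d,
              ∑ i, pd i (fun y => (flux H m₁ u₁ i y - flux H m₂ u₂ i y) * (u₁ y - u₂ y)) x := by
          have iR12 : IntegrableOn (fun x => m₁ x * (H (grad u₂ x) - H (grad u₁ x)
              - ∑ i, pd i H (grad u₁ x) * (pd i u₂ x - pd i u₁ x))
            + m₂ x * (H (grad u₁ x) - H (grad u₂ x)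
              - ∑ i, pd i H (grad u₂ x) * (pd i u₁ x - pd i u₂ x))) (cube d) volume :=
            iR1.add iR2
          have iR123 : IntegrableOn (fun x => m₁ x * (H (grad u₂ x) - H (grad u₁ x)
              - ∑ i, pd i H (grad u₁ x) * (pd i u₂ x - pd i u₁ x))
            + m₂ x * (H (grad u₁ x) - H (grad u₂ x)
              - ∑ i, pd i H (grad u₂ x) * (pd i u₁ x - pd i u₂ x))
            + (m₁ x - m₂ x) * (g (m₁ x) - g (m₂ x))) (cube d) volume := iR12.add iR3
          rw [integral_sub iR123 iD, integral_add iR12 iR3, integral_add iR1 iR2]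
      _ = _ := by rw [hD0]; ring
  · have h1 : 0 ≤ ∫ x in cube d, m₁ x * (H (grad u₂ x) - H (grad u₁ x)
        - ∑ i, pd i H (grad u₁ x) * (pd i u₂ x - pd i u₁ x)) :=
      setIntegral_nonneg hmeas fun x _ =>
        mul_nonneg (hm₁nn x) (convex_bregman hH hHconv (grad u₁ x) (grad u₂ x))
    have h2 : 0 ≤ ∫ x in cube d, m₂ x * (H (grad u₁ x) - H (grad u₂ x)
        - ∑ i, pd i H (grad u₂ x) * (pd i u₁ x - pd i u₂ x)) :=
      setIntegral_nonneg hmeas fun x _ =>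
        mul_nonneg (hm₂nn x) (convex_bregman hH hHconv (grad u₂ x) (grad u₁ x))
    have h3 : 0 ≤ ∫ x in cube d, (m₁ x - m₂ x) * (g (m₁ x) - g (m₂ x)) := by
      refine setIntegral_nonneg hmeas fun x _ => ?_
      rcases le_total (m₁ x) (m₂ x) with h | h
      · have hg' : g (m₁ x) ≤ g (m₂ x) := hgmono (hm₁nn x) (hm₂nn x) h
        nlinarith
      · have hg' : g (m₂ x) ≤ g (m₁ x) := hgmono (hm₂nn x) (hm₁nn x) h
        nlinarith
    linarith
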